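/- Let n ≥ 2 be an integer, let r : (−T, T) → ℝ be a maximal n-catenoid profile function, let z₁(c) < 0 < z₂(c) denote the two solutions of z·r'(z − c) = r(z − c), and let f_i(c) = z_i(c)² + r(z_i(c) − c)². Then for i = 1, 2 and c ≥ 0, ((n−1)/2)·f_i''(c) = n − 3 − 2/(n−1) + (n/(n−1))·( r(z_i(c) − c)^(2n−2) + r(z_i(c) − c)^(2−2n) ). In particular f₁''(0) = f₂''(0). -/

import Mathlib

set_option maxHeartbeats 1000000

open Set Filter Topology

namespace CatAux

def U (T : EReal) : Set ℝ := {z : ℝ | (z : EReal) ∈ Set.Ioo (-T) T}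

lemma mem_U {T : EReal} {z : ℝ} : z ∈ U T ↔ ((z : EReal) ∈ Set.Ioo (-T) T) := Iff.rfl

lemma isOpen_U (T : EReal) : IsOpen (U T) :=
  isOpen_Ioo.preimage continuous_coe_real_ereal

lemma convex_U (T : EReal) : Convex ℝ (U T) := by
  rw [convex_iff_ordConnected]
  constructor
  intro x hx y hy w hw
  exact ⟨lt_of_lt_of_le hx.1 (EReal.coe_le_coe_iff.2 hw.1),
         lt_of_le_of_lt (EReal.coe_le_coe_iff.2 hw.2) hy.2⟩

lemma neg_mem_U {T : EReal} {z : ℝ} (hz : z ∈ U T) : -z ∈ U T := by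
  obtain ⟨h1, h2⟩ := hz
  constructor
  · rw [EReal.coe_neg]
    exact EReal.neg_lt_neg_iff.2 h2
  · rw [EReal.coe_neg, ← EReal.neg_lt_neg_iff, neg_neg]
    exact h1

lemma zero_mem_U {T : EReal} (hT : 0 < T) : (0:ℝ) ∈ U T := by
  constructor
  · rw [show ((0:ℝ):EReal) = (0:EReal) by norm_num, ← EReal.neg_lt_neg_iff, neg_neg, neg_zero]
    exact hT
  · rw [show ((0:ℝ):EReal) = (0:EReal) by norm_num]
    exact hT

lemma Icc_subset_U {T : EReal} {a b : ℝ} (ha : a ∈ U T) (hb : b ∈ U T) :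
    Set.Icc a b ⊆ U T :=
  (convex_iff_ordConnected.1 (convex_U T)).out ha hb

variable {n : ℕ} {T : EReal} {r : ℝ → ℝ}

lemma hQformula
    (hpos : ∀ z ∈ U T, 0 < r z)
    (hODE : ∀ z ∈ U T, r z * deriv (deriv r) z - ((n:ℝ)-1)*(1 + (deriv r z)^2) = 0) :
    ∀ z ∈ U T, deriv (deriv r) z = ((n:ℝ)-1)*(1+(deriv r z)^2)/r z := by
  intro z hz
  have h := hODE z hz
  have hr0 := (hpos z hz).ne'
  field_simp
  linarith

lemma contDiffOn_r
    (hdiff : ∀ z ∈ U T, DifferentiableAt ℝ r z ∧ DifferentiableAt ℝ (deriv r) z) :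
    ContDiffOn ℝ 1 r (U T) := by
  rw [show (1 : WithTop ℕ∞) = 0 + 1 from rfl, contDiffOn_succ_iff_deriv_of_isOpen (isOpen_U T)]
  refine ⟨fun z hz => (hdiff z hz).1.differentiableWithinAt, by simp, ?_⟩
  rw [contDiffOn_zero]
  exact fun z hz => ((hdiff z hz).2.continuousAt).continuousWithinAt

lemma contDiffOn_r'
    (hpos : ∀ z ∈ U T, 0 < r z)
    (hdiff : ∀ z ∈ U T, DifferentiableAt ℝ r z ∧ DifferentiableAt ℝ (deriv r) z)
    (hODE : ∀ z ∈ U T, r z * deriv (deriv r) z - ((n:ℝ)-1)*(1 + (deriv r z)^2) = 0) :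
    ContDiffOn ℝ 1 (deriv r) (U T) := by
  rw [show (1 : WithTop ℕ∞) = 0 + 1 from rfl, contDiffOn_succ_iff_deriv_of_isOpen (isOpen_U T)]
  refine ⟨fun z hz => (hdiff z hz).2.differentiableWithinAt, by simp, ?_⟩
  rw [contDiffOn_zero]
  have hc' : ContinuousOn (deriv r) (U T) :=
    fun z hz => ((hdiff z hz).2.continuousAt).continuousWithinAt
  have hcont : ContinuousOn (fun z => ((n:ℝ)-1)*(1+(deriv r z)^2)/r z) (U T) := by
    apply ContinuousOn.div
    · exact continuousOn_const.mul (continuousOn_const.add (hc'.pow 2))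
    · exact fun z hz => ((hdiff z hz).1.continuousAt).continuousWithinAt
    · exact fun z hz => (hpos z hz).ne'
  exact hcont.congr (hQformula hpos hODE)

lemma hasStrict_r
    (hdiff : ∀ z ∈ U T, DifferentiableAt ℝ r z ∧ DifferentiableAt ℝ (deriv r) z) :
    ∀ z ∈ U T, HasStrictDerivAt r (deriv r z) z := fun z hz =>
  (((contDiffOn_r hdiff).contDiffAt ((isOpen_U T).mem_nhds hz)).hasStrictDerivAt one_ne_zero)

lemma hasStrict_r'
    (hpos : ∀ z ∈ U T, 0 < r z)
    (hdiff : ∀ z ∈ U T, DifferentiableAt ℝ r z ∧ DifferentiableAt ℝ (deriv r) z)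
    (hODE : ∀ z ∈ U T, r z * deriv (deriv r) z - ((n:ℝ)-1)*(1 + (deriv r z)^2) = 0) :
    ∀ z ∈ U T, HasStrictDerivAt (deriv r) (deriv (deriv r) z) z := fun z hz =>
  (((contDiffOn_r' hpos hdiff hODE).contDiffAt ((isOpen_U T).mem_nhds hz)).hasStrictDerivAt one_ne_zero)

lemma first_integral (hn : 2 ≤ n) (hT : 0 < T)
    (hpos : ∀ z ∈ U T, 0 < r z)
    (hdiff : ∀ z ∈ U T, DifferentiableAt ℝ r z ∧ DifferentiableAt ℝ (deriv r) z)
    (hr0 : r 0 = 1) (hr'0 : deriv r 0 = 0)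
    (hODE : ∀ z ∈ U T, r z * deriv (deriv r) z - ((n:ℝ)-1)*(1 + (deriv r z)^2) = 0) :
    ∀ z ∈ U T, 1 + (deriv r z)^2 = (r z)^(2*n-2) := by
  have hQ := hQformula hpos hODE
  set H : ℝ → ℝ := fun y => (1 + (deriv r y)^2) * (r y)^(2-2*(n:ℤ)) with hH
  have hHd : ∀ z ∈ U T, HasDerivAt H 0 z := by
    intro z hz
    have hR := (hpos z hz).ne'
    have h1 : HasDerivAt (fun y => 1 + (deriv r y)^2)
        ((2:ℕ) * deriv r z ^ 1 * deriv (deriv r) z) z :=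
      (((hdiff z hz).2.hasDerivAt).pow 2).const_add 1
    have h2 : HasDerivAt (fun y => (r y)^(2-2*(n:ℤ)))
        (((2-2*(n:ℤ) : ℤ) : ℝ) * (r z)^(2-2*(n:ℤ)-1) * deriv r z) z := by
      exact (hasDerivAt_zpow (2-2*(n:ℤ)) (r z) (Or.inl hR)).comp z ((hdiff z hz).1.hasDerivAt)
    have h3 := h1.mul h2
    refine h3.congr_deriv ?_
    rw [hQ z hz, zpow_sub_one₀ hR]
    push_cast
    field_simp
    ring
  have key : ∀ z ∈ U T, H z = 1 := by
    have h0 : (0:ℝ) ∈ U T := zero_mem_U hT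
    have hH0 : H 0 = 1 := by simp only [hH, hr0, hr'0]; norm_num
    intro z hz
    rcases le_total 0 z with h | h
    · have hIcc : Icc (0:ℝ) z ⊆ U T := Icc_subset_U h0 hz
      have := constant_of_has_deriv_right_zero
        (f := H) (a := 0) (b := z)
        (fun x hx => (hHd x (hIcc hx)).continuousAt.continuousWithinAt)
        (fun x hx => (hHd x (hIcc (Ico_subset_Icc_self hx))).hasDerivWithinAt)
        z ⟨h, le_refl z⟩
      rw [this, hH0]
    · have hIcc : Icc z (0:ℝ) ⊆ U T := Icc_subset_U hz h0
      have := constant_of_has_deriv_right_zero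
        (f := H) (a := z) (b := 0)
        (fun x hx => (hHd x (hIcc hx)).continuousAt.continuousWithinAt)
        (fun x hx => (hHd x (hIcc (Ico_subset_Icc_self hx))).hasDerivWithinAt)
        0 ⟨h, le_refl 0⟩
      rw [← this]
      exact hH0
  intro z hz
  have h1 : (1 + (deriv r z)^2) * (r z)^(2-2*(n:ℤ)) = 1 := key z hz
  have hR := (hpos z hz).ne'
  have hcast : ((2*n-2 : ℕ) : ℤ) = -(2-2*(n:ℤ)) := by omega
  calc 1 + (deriv r z)^2 = ((r z)^(2-2*(n:ℤ)))⁻¹ := eq_inv_of_mul_eq_one_left h1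
    _ = (r z) ^ (-(2-2*(n:ℤ))) := (zpow_neg _ _).symm
    _ = (r z) ^ ((2*n-2:ℕ):ℤ) := by rw [hcast]
    _ = (r z) ^ (2*n-2:ℕ) := zpow_natCast _ _

lemma r_even_aux (hn : 2 ≤ n)
    (hpos : ∀ z ∈ U T, 0 < r z)
    (hdiff : ∀ z ∈ U T, DifferentiableAt ℝ r z ∧ DifferentiableAt ℝ (deriv r) z)
    (hr'0 : deriv r 0 = 0)
    (hODE : ∀ z ∈ U T, r z * deriv (deriv r) z - ((n:ℝ)-1)*(1 + (deriv r z)^2) = 0) :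
    ∀ a ∈ U T, 0 ≤ a → r (-a) = r a ∧ deriv r (-a) = -deriv r a := by
  intro a haU ha0
  have hQ := hQformula hpos hODE
  have hnn : (1:ℝ) ≤ (n:ℝ) - 1 := by
    have : (2:ℝ) ≤ (n:ℝ) := by exact_mod_cast hn
    linarith
  set K : Set ℝ := Icc (-a) a with hK
  have hKU : K ⊆ U T := Icc_subset_U (neg_mem_U haU) haU
  have haK : a ∈ K := ⟨by linarith, le_refl a⟩
  have h0K : (0:ℝ) ∈ K := ⟨by linarith, ha0⟩
  have hnegK : ∀ z ∈ K, -z ∈ K := by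
    intro z hz
    obtain ⟨h1, h2⟩ := hz
    exact ⟨by linarith, by linarith⟩
  have contrK : ContinuousOn r K :=
    fun z hz => ((hdiff z (hKU hz)).1.continuousAt).continuousWithinAt
  have contr'K : ContinuousOn (deriv r) K :=
    fun z hz => ((hdiff z (hKU hz)).2.continuousAt).continuousWithinAt
  obtain ⟨x₀, hx₀K, hx₀min⟩ := isCompact_Icc.exists_isMinOn ⟨a, haK⟩ contrK
  set ρ : ℝ := r x₀ with hρdef
  have hρ : 0 < ρ := hpos x₀ (hKU hx₀K)
  have hmin : ∀ x ∈ K, ρ ≤ r x := fun x hx => hx₀min hx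
  obtain ⟨x₁, hx₁K, hx₁max⟩ := isCompact_Icc.exists_isMaxOn ⟨a, haK⟩ contr'K.abs
  set M : ℝ := |deriv r x₁| with hMdef
  have hM : ∀ x ∈ K, |deriv r x| ≤ M := fun x hx => hx₁max hx
  have hM0 : 0 ≤ M := abs_nonneg _
  obtain ⟨x₂, hx₂K, hx₂max⟩ := isCompact_Icc.exists_isMaxOn ⟨a, haK⟩ contrK
  set Rm : ℝ := r x₂ with hRmdef
  have hRm : ∀ x ∈ K, r x ≤ Rm := fun x hx => hx₂max hx
  have hRm0 : 0 < Rm := hpos x₂ (hKU hx₂K)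
  set K₁ : ℝ := ((n:ℝ)-1)*(1+M^2)/ρ^2 with hK₁def
  set K₂ : ℝ := ((n:ℝ)-1)*(2*M*Rm)/ρ^2 with hK₂def
  have hK₁0 : 0 ≤ K₁ := by
    apply div_nonneg _ (sq_nonneg _)
    apply mul_nonneg (by linarith) (by positivity)
  have hK₂0 : 0 ≤ K₂ := by
    apply div_nonneg _ (sq_nonneg _)
    apply mul_nonneg (by linarith) (by positivity)
  set C : ℝ := 1 + K₁ + 2*K₂ with hCdef
  set d : ℝ → ℝ := fun z => r z - r (-z) with hddef
  set e : ℝ → ℝ := fun z => deriv r z + deriv r (-z) with hedef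
  set g : ℝ → ℝ := fun z => deriv (deriv r) z - deriv (deriv r) (-z) with hgdef
  set E : ℝ → ℝ := fun z => d z ^ 2 + e z ^ 2 with hEdef
  -- derivative of E
  have hEderiv : ∀ z ∈ K, HasDerivAt E (2*(d z)*(e z) + 2*(e z)*(g z)) z := by
    intro z hz
    have hzU : z ∈ U T := hKU hz
    have hzU' : -z ∈ U T := hKU (hnegK z hz)
    have hrd : HasDerivAt (fun y => r (-y)) (-(deriv r (-z))) z := by
      have h := ((hdiff (-z) hzU').1.hasDerivAt).comp z (hasDerivAt_neg z)
      rw [mul_neg_one] at h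
      exact h
    have hr'd : HasDerivAt (fun y => deriv r (-y)) (-(deriv (deriv r) (-z))) z := by
      have h := ((hdiff (-z) hzU').2.hasDerivAt).comp z (hasDerivAt_neg z)
      rw [mul_neg_one] at h
      exact h
    have hd : HasDerivAt d (e z) z := by
      have h := ((hdiff z hzU).1.hasDerivAt).sub hrd
      rw [sub_neg_eq_add] at h
      exact h
    have he : HasDerivAt e (g z) z := by
      have h := ((hdiff z hzU).2.hasDerivAt).add hr'd
      rw [← sub_eq_add_neg] at h
      exact h
    have h := (hd.pow 2).add (he.pow 2)
    refine h.congr_deriv ?_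
    ring
  -- bound on |g|
  have hgbound : ∀ z ∈ K, |g z| ≤ K₁ * |d z| + K₂ * |e z| := by
    intro z hz
    have hzU : z ∈ U T := hKU hz
    have hzU' : -z ∈ U T := hKU (hnegK z hz)
    have hp : 0 < r z := hpos z hzU
    have hq : 0 < r (-z) := hpos (-z) hzU'
    have hkey : g z = (((n:ℝ)-1)*(1+(deriv r z)^2)*(r (-z) - r z)
        + ((n:ℝ)-1)*((deriv r z - deriv r (-z))*(e z))*(r z)) / (r z * r (-z)) := by
      simp only [hgdef, hedef]
      rw [hQ z hzU, hQ (-z) hzU']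
      field_simp
      ring
    rw [hkey, abs_div]
    have hpq : |r z * r (-z)| = r z * r (-z) := abs_of_pos (mul_pos hp hq)
    have hnum : |((n:ℝ)-1)*(1+(deriv r z)^2)*(r (-z) - r z)
        + ((n:ℝ)-1)*((deriv r z - deriv r (-z))*(e z))*(r z)|
        ≤ ((n:ℝ)-1)*(1+M^2)*|d z| + ((n:ℝ)-1)*(2*M*Rm)*|e z| := by
      refine (abs_add_le _ _).trans (add_le_add ?_ ?_)
      · rw [abs_mul, abs_mul]
        have h1 : |(n:ℝ)-1| = (n:ℝ)-1 := abs_of_nonneg (by linarith)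
        have h2 : |1+(deriv r z)^2| ≤ 1 + M^2 := by
          rw [abs_of_nonneg (by positivity)]
          have hz1 := hM z hz
          have hz2 := mul_self_le_mul_self (abs_nonneg (deriv r z)) hz1
          nlinarith [sq_abs (deriv r z)]
        have h3 : |r (-z) - r z| = |d z| := by rw [abs_sub_comm]
        rw [h1, h3]
        apply mul_le_mul_of_nonneg_right _ (abs_nonneg _)
        exact mul_le_mul_of_nonneg_left h2 (by linarith)
      · rw [abs_mul, abs_mul, abs_mul]
        have h1 : |(n:ℝ)-1| = (n:ℝ)-1 := abs_of_nonneg (by linarith)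
        have h2 : |deriv r z - deriv r (-z)| ≤ 2*M := by
          have := hM z hz
          have := hM (-z) (hnegK z hz)
          calc |deriv r z - deriv r (-z)| ≤ |deriv r z| + |deriv r (-z)| := abs_sub _ _
            _ ≤ 2*M := by linarith
        have h3 : |r z| ≤ Rm := by rw [abs_of_pos hp]; exact hRm z hz
        rw [h1]
        have h4 : |deriv r z - deriv r (-z)| * |e z| ≤ (2*M) * |e z| :=
          mul_le_mul_of_nonneg_right h2 (abs_nonneg _)
        have h5 : ((n:ℝ)-1) * (|deriv r z - deriv r (-z)| * |e z|) * |r z|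
            ≤ ((n:ℝ)-1) * ((2*M) * |e z|) * Rm := by
          apply mul_le_mul (mul_le_mul_of_nonneg_left h4 (by linarith)) h3 (abs_nonneg _)
          exact mul_nonneg (by linarith) (by positivity)
        have h6 : ((n:ℝ)-1) * ((2*M) * |e z|) * Rm = ((n:ℝ)-1)*(2*M*Rm)*|e z| := by ring
        linarith
    calc |((n:ℝ)-1)*(1+(deriv r z)^2)*(r (-z) - r z)
        + ((n:ℝ)-1)*((deriv r z - deriv r (-z))*(e z))*(r z)| / |r z * r (-z)|
        ≤ (((n:ℝ)-1)*(1+M^2)*|d z| + ((n:ℝ)-1)*(2*M*Rm)*|e z|) / ρ^2 := by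
          apply div_le_div₀ _ hnum (by positivity) _
          · positivity
          · rw [hpq]
            have h1 := hmin z hz
            have h2 := hmin (-z) (hnegK z hz)
            nlinarith
      _ = K₁ * |d z| + K₂ * |e z| := by
          rw [hK₁def, hK₂def]
          field_simp
  -- E' ≤ C E
  have hEC : ∀ z ∈ K, 2*(d z)*(e z) + 2*(e z)*(g z) ≤ C * E z := by
    intro z hz
    have hb := hgbound z hz
    have h1 : e z * g z ≤ |e z| * (K₁*|d z| + K₂*|e z|) :=
      calc e z * g z ≤ |e z * g z| := le_abs_self _
        _ = |e z| * |g z| := abs_mul _ _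
        _ ≤ |e z| * (K₁*|d z|+K₂*|e z|) := mul_le_mul_of_nonneg_left hb (abs_nonneg _)
    simp only [hEdef, hCdef]
    nlinarith [h1, sq_nonneg (d z - e z), mul_nonneg hK₁0 (sq_nonneg (|d z| - |e z|)),
      mul_nonneg hK₂0 (sq_nonneg (d z)), sq_abs (d z), sq_abs (e z),
      abs_nonneg (d z), abs_nonneg (e z)]
  -- F antitone
  set F : ℝ → ℝ := fun z => E z * Real.exp (-C*z) with hFdef
  have hFd : ∀ z ∈ K, HasDerivAt F
      ((2*(d z)*(e z) + 2*(e z)*(g z)) * Real.exp (-C*z) + E z * (Real.exp (-C*z) * (-C))) z := by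
    intro z hz
    have hexp : HasDerivAt (fun y => Real.exp (-C*y)) (Real.exp (-C*z) * (-C)) z := by
      have h : HasDerivAt (fun y : ℝ => -C*y) (-C) z := by
        simpa using (hasDerivAt_id z).const_mul (-C)
      exact h.exp
    exact (hEderiv z hz).mul hexp
  have hIccK : Icc (0:ℝ) a ⊆ K := fun x hx => ⟨by linarith [hx.1], hx.2⟩
  have hant : AntitoneOn F (Icc (0:ℝ) a) := by
    apply antitoneOn_of_deriv_nonpos (convex_Icc 0 a)
    · exact fun x hx => ((hFd x (hIccK hx)).continuousAt).continuousWithinAt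
    · intro x hx
      rw [interior_Icc] at hx
      exact ((hFd x (hIccK (Ioo_subset_Icc_self hx))).differentiableAt).differentiableWithinAt
    · intro x hx
      rw [interior_Icc] at hx
      have hxK := hIccK (Ioo_subset_Icc_self hx)
      rw [(hFd x hxK).deriv]
      have h1 := hEC x hxK
      have h2 := Real.exp_pos (-C*x)
      have h3 : 0 ≤ E x := by simp only [hEdef]; positivity
      nlinarith
  have hF0 : F 0 = 0 := by
    simp only [hFdef, hEdef, hddef, hedef]
    rw [neg_zero, hr'0]
    ring
  have hFa : F a ≤ 0 := by
    rw [← hF0]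
    exact hant ⟨le_refl 0, ha0⟩ ⟨ha0, le_refl a⟩ ha0
  have hEa : E a = 0 := by
    have h2 := Real.exp_pos (-C*a)
    have h3 : 0 ≤ E a := by simp only [hEdef]; positivity
    have : E a * Real.exp (-C*a) ≤ 0 := hFa
    nlinarith
  have hEa' : d a ^ 2 + e a ^ 2 = 0 := by simpa [hEdef] using hEa
  have hda : d a = 0 := by
    have h2 : d a ^ 2 = 0 := by nlinarith [sq_nonneg (d a), sq_nonneg (e a)]
    exact (pow_eq_zero_iff (two_ne_zero)).1 h2
  have hea : e a = 0 := by
    have h2 : e a ^ 2 = 0 := by nlinarith [sq_nonneg (d a), sq_nonneg (e a)]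
    exact (pow_eq_zero_iff (two_ne_zero)).1 h2
  constructor
  · have : r a - r (-a) = 0 := hda
    linarith
  · have : deriv r a + deriv r (-a) = 0 := hea
    linarith


lemma r_even (hn : 2 ≤ n)
    (hpos : ∀ z ∈ U T, 0 < r z)
    (hdiff : ∀ z ∈ U T, DifferentiableAt ℝ r z ∧ DifferentiableAt ℝ (deriv r) z)
    (hr'0 : deriv r 0 = 0)
    (hODE : ∀ z ∈ U T, r z * deriv (deriv r) z - ((n:ℝ)-1)*(1 + (deriv r z)^2) = 0) :
    ∀ a ∈ U T, r (-a) = r a ∧ deriv r (-a) = -deriv r a := by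
  intro a ha
  rcases le_total 0 a with h | h
  · exact r_even_aux hn hpos hdiff hr'0 hODE a ha h
  · have h2 := r_even_aux hn hpos hdiff hr'0 hODE (-a) (neg_mem_U ha) (by linarith)
    rw [neg_neg] at h2
    exact ⟨h2.1.symm, by linarith [h2.2]⟩

lemma implicit_loc (Φ : ℝ → ℝ → ℝ) (c₀ z₀ A B : ℝ) (hB : B ≠ 0)
    (hΦ : HasStrictFDerivAt (fun p : ℝ × ℝ => Φ p.1 p.2)
      (A • (ContinuousLinearMap.fst ℝ ℝ ℝ) + B • (ContinuousLinearMap.snd ℝ ℝ ℝ)) (c₀, z₀))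
    (h0 : Φ c₀ z₀ = 0) :
    ∃ g : ℝ → ℝ, g c₀ = z₀ ∧ HasDerivAt g (-(A/B)) c₀ ∧ ∀ᶠ c in 𝓝 c₀, Φ c (g c) = 0 := by
  set Ψ : ℝ × ℝ → ℝ × ℝ := fun p => (p.1, Φ p.1 p.2) with hΨdef
  set L : ℝ × ℝ →L[ℝ] ℝ × ℝ :=
    (ContinuousLinearMap.fst ℝ ℝ ℝ).prod
      (A • (ContinuousLinearMap.fst ℝ ℝ ℝ) + B • (ContinuousLinearMap.snd ℝ ℝ ℝ)) with hLdef
  set Mi : ℝ × ℝ →L[ℝ] ℝ × ℝ :=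
    (ContinuousLinearMap.fst ℝ ℝ ℝ).prod
      (B⁻¹ • ((ContinuousLinearMap.snd ℝ ℝ ℝ) - A • (ContinuousLinearMap.fst ℝ ℝ ℝ))) with hMdef
  have h1 : Function.LeftInverse Mi L := by
    intro x
    simp only [hLdef, hMdef, ContinuousLinearMap.prod_apply, ContinuousLinearMap.coe_fst',
      ContinuousLinearMap.add_apply, ContinuousLinearMap.smul_apply,
      ContinuousLinearMap.coe_snd', ContinuousLinearMap.coe_sub', Pi.sub_apply,
      smul_eq_mul]
    refine Prod.ext rfl ?_
    simp only []
    field_simp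
    ring
  have h2 : Function.RightInverse Mi L := by
    intro x
    simp only [hLdef, hMdef, ContinuousLinearMap.prod_apply, ContinuousLinearMap.coe_fst',
      ContinuousLinearMap.add_apply, ContinuousLinearMap.smul_apply,
      ContinuousLinearMap.coe_snd', ContinuousLinearMap.coe_sub', Pi.sub_apply,
      smul_eq_mul]
    refine Prod.ext rfl ?_
    simp only []
    field_simp
    ring
  set E : (ℝ × ℝ) ≃L[ℝ] (ℝ × ℝ) := ContinuousLinearEquiv.equivOfInverse L Mi h1 h2 with hEdef
  have hΨ : HasStrictFDerivAt Ψ (E : (ℝ × ℝ) →L[ℝ] (ℝ × ℝ)) (c₀, z₀) :=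
    HasStrictFDerivAt.prodMk hasStrictFDerivAt_fst hΦ
  set linv := hΨ.localInverse Ψ _ _ with hlinvdef
  refine ⟨fun c => (linv (c, 0)).2, ?_, ?_, ?_⟩
  · have key : Ψ (c₀, z₀) = (c₀, 0) := by simp [hΨdef, h0]
    have h3 := hΨ.localInverse_apply_image
    rw [key] at h3
    exact congrArg Prod.snd h3
  · have key : Ψ (c₀, z₀) = (c₀, 0) := by simp [hΨdef, h0]
    have hinv := hΨ.to_localInverse
    rw [key] at hinv
    have hcurve : HasDerivAt (fun c : ℝ => ((c, 0) : ℝ × ℝ)) ((1:ℝ), (0:ℝ)) c₀ :=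
      HasDerivAt.prodMk (hasDerivAt_id c₀) (hasDerivAt_const c₀ 0)
    have hcomp := (hinv.hasFDerivAt).comp_hasDerivAt c₀ hcurve
    have hsnd := (ContinuousLinearMap.snd ℝ ℝ ℝ).hasFDerivAt.comp_hasDerivAt c₀ hcomp
    have hval : (E.symm ((1:ℝ), (0:ℝ))) = ((1:ℝ), -(A/B)) := by
      rw [ContinuousLinearEquiv.symm_apply_eq]
      show ((1:ℝ), (0:ℝ)) = L ((1:ℝ), -(A/B))
      simp only [hLdef, ContinuousLinearMap.prod_apply, ContinuousLinearMap.coe_fst',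
        ContinuousLinearMap.add_apply, ContinuousLinearMap.smul_apply,
        ContinuousLinearMap.coe_snd', smul_eq_mul]
      refine Prod.ext rfl ?_
      simp only []
      field_simp
      ring
    simp only [ContinuousLinearEquiv.coe_coe] at hsnd
    rw [hval] at hsnd
    exact hsnd
  · have key : Ψ (c₀, z₀) = (c₀, 0) := by simp [hΨdef, h0]
    have hev := hΨ.eventually_right_inverse
    rw [key] at hev
    have htend : Tendsto (fun c : ℝ => ((c, 0) : ℝ × ℝ)) (𝓝 c₀) (𝓝 ((c₀, 0) : ℝ × ℝ)) :=
      (continuous_id.prodMk continuous_const).tendsto c₀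
    have hev2 := htend.eventually hev
    filter_upwards [hev2] with c hc
    have ha : (linv (c, 0)).1 = c := congrArg Prod.fst hc
    have hb := congrArg Prod.snd hc
    simp only [hΨdef] at hb
    rw [ha] at hb
    exact hb

lemma branch_formula
    (hn : 2 ≤ n) (hT : 0 < T)
    (hpos : ∀ z ∈ U T, 0 < r z)
    (hdiff : ∀ z ∈ U T, DifferentiableAt ℝ r z ∧ DifferentiableAt ℝ (deriv r) z)
    (hr0 : r 0 = 1) (hr'0 : deriv r 0 = 0)
    (hODE : ∀ z ∈ U T, r z * deriv (deriv r) z - ((n:ℝ)-1)*(1 + (deriv r z)^2) = 0)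
    (z zo : ℝ → ℝ) (sgn : ℝ)
    (hdom : ∀ c, 0 ≤ c → (z c - c) ∈ U T)
    (hz : ∀ c, 0 ≤ c → 0 < sgn * z c) (hzo : ∀ c, 0 ≤ c → sgn * zo c < 0)
    (heq : ∀ c, 0 ≤ c → z c * deriv r (z c - c) = r (z c - c))
    (huniq : ∀ c, 0 ≤ c → ∀ x : ℝ, ((x - c) : ℝ) ∈ U T →
        x * deriv r (x - c) = r (x - c) → x = z c ∨ x = zo c)
    (f : ℝ → ℝ) (hf : f = fun c => (z c)^2 + (r (z c - c))^2) :
    ∀ c, 0 ≤ c →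
      (((n:ℝ)-1)/2) * derivWithin (derivWithin f (Set.Ici 0)) (Set.Ici 0) c =
        (n:ℝ) - 3 - 2/((n:ℝ)-1) +
          (n:ℝ)/((n:ℝ)-1) * ((r (z c - c))^(2*n-2) + ((r (z c - c))^(2*n-2))⁻¹) := by
  have hFI := first_integral hn hT hpos hdiff hr0 hr'0 hODE
  have hQ := hQformula hpos hODE
  have hstr := hasStrict_r hdiff
  have hstr' := hasStrict_r' hpos hdiff hODE
  have hn1 : (1:ℝ) ≤ (n:ℝ) - 1 := by
    have : (2:ℝ) ≤ (n:ℝ) := by exact_mod_cast hn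
    linarith
  have hnne : ((n:ℝ) - 1) ≠ 0 := by linarith
  have hP0 : ∀ c, 0 ≤ c → deriv r (z c - c) ≠ 0 := by
    intro c hc h
    have h1 := heq c hc
    rw [h, mul_zero] at h1
    exact absurd h1.symm (hpos _ (hdom c hc)).ne'
  have hz0 : ∀ c, 0 ≤ c → z c ≠ 0 := by
    intro c hc h
    have h1 := hz c hc
    rw [h, mul_zero] at h1
    exact lt_irrefl 0 h1
  have hQpos : ∀ c, 0 ≤ c → 0 < deriv (deriv r) (z c - c) := by
    intro c hc
    rw [hQ _ (hdom c hc)]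
    have h1 := hpos _ (hdom c hc)
    have h2 : (0:ℝ) < 1 + (deriv r (z c - c))^2 := by positivity
    have h3 : (0:ℝ) < (n:ℝ) - 1 := by linarith
    positivity
  -- the key derivative of z
  have key0 : ∀ c, 0 ≤ c → HasDerivWithinAt z
      (1 - (deriv r (z c - c))^2 / (((n:ℝ)-1) * (1 + (deriv r (z c - c))^2)))
      (Set.Ici 0) c := by
    intro c₀ hc₀
    have hw₀U : (z c₀ - c₀) ∈ U T := hdom c₀ hc₀
    have hm : HasStrictFDerivAt (fun p : ℝ × ℝ => p.2 - p.1)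
        ((ContinuousLinearMap.snd ℝ ℝ ℝ) - (ContinuousLinearMap.fst ℝ ℝ ℝ)) (c₀, z c₀) :=
      hasStrictFDerivAt_snd.sub hasStrictFDerivAt_fst
    have h1 : HasStrictFDerivAt (fun p : ℝ × ℝ => deriv r (p.2 - p.1))
        ((deriv (deriv r) (z c₀ - c₀)) •
          ((ContinuousLinearMap.snd ℝ ℝ ℝ) - (ContinuousLinearMap.fst ℝ ℝ ℝ))) (c₀, z c₀) :=
      (hstr' (z c₀ - c₀) hw₀U).comp_hasStrictFDerivAt_of_eq (c₀, z c₀) hm rfl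
    have h3 : HasStrictFDerivAt (fun p : ℝ × ℝ => r (p.2 - p.1))
        ((deriv r (z c₀ - c₀)) •
          ((ContinuousLinearMap.snd ℝ ℝ ℝ) - (ContinuousLinearMap.fst ℝ ℝ ℝ))) (c₀, z c₀) :=
      (hstr (z c₀ - c₀) hw₀U).comp_hasStrictFDerivAt_of_eq (c₀, z c₀) hm rfl
    have h2 := hasStrictFDerivAt_snd.mul h1
    have h4 := h2.sub h3
    set A : ℝ := deriv r (z c₀ - c₀) - z c₀ * deriv (deriv r) (z c₀ - c₀) with hA
    set B : ℝ := z c₀ * deriv (deriv r) (z c₀ - c₀) with hB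
    have hVL : (c₀, z c₀).2 • ((deriv (deriv r) (z c₀ - c₀)) •
          ((ContinuousLinearMap.snd ℝ ℝ ℝ) - (ContinuousLinearMap.fst ℝ ℝ ℝ)))
        + (deriv r ((c₀, z c₀).2 - (c₀, z c₀).1)) • (ContinuousLinearMap.snd ℝ ℝ ℝ)
        - (deriv r (z c₀ - c₀)) •
          ((ContinuousLinearMap.snd ℝ ℝ ℝ) - (ContinuousLinearMap.fst ℝ ℝ ℝ))
        = A • (ContinuousLinearMap.fst ℝ ℝ ℝ) + B • (ContinuousLinearMap.snd ℝ ℝ ℝ) := by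
      apply ContinuousLinearMap.ext
      intro q
      simp only [ContinuousLinearMap.add_apply, ContinuousLinearMap.sub_apply,
        ContinuousLinearMap.smul_apply, ContinuousLinearMap.coe_fst',
        ContinuousLinearMap.coe_snd', smul_eq_mul, hA, hB]
      ring
    rw [hVL] at h4
    have hΦ0 : (fun (c : ℝ) (x : ℝ) => x * deriv r (x - c) - r (x - c)) c₀ (z c₀) = 0 := by
      simp only [sub_eq_zero]
      exact heq c₀ hc₀
    have hBne : B ≠ 0 := mul_ne_zero (hz0 c₀ hc₀) (hQpos c₀ hc₀).ne'
    obtain ⟨g, hg0, hgd, hgev⟩ := implicit_loc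
      (fun (c : ℝ) (x : ℝ) => x * deriv r (x - c) - r (x - c)) c₀ (z c₀) A B hBne h4 hΦ0
    have hgcont : ContinuousAt g c₀ := hgd.continuousAt
    have hev1 : ∀ᶠ c in 𝓝 c₀, (g c - c) ∈ U T := by
      have hc : ContinuousAt (fun c => g c - c) c₀ := hgcont.sub continuousAt_id
      have hmem : U T ∈ 𝓝 (g c₀ - c₀) := by
        rw [hg0]
        exact (isOpen_U T).mem_nhds hw₀U
      exact hc.preimage_mem_nhds hmem
    have hev2 : ∀ᶠ c in 𝓝 c₀, 0 < sgn * g c := by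
      have hc : ContinuousAt (fun c => sgn * g c) c₀ := continuousAt_const.mul hgcont
      have hmem : {x : ℝ | 0 < x} ∈ 𝓝 (sgn * g c₀) := by
        apply (isOpen_lt continuous_const continuous_id).mem_nhds
        rw [hg0]
        exact hz c₀ hc₀
      exact hc.preimage_mem_nhds hmem
    have hevz : z =ᶠ[𝓝[Set.Ici (0:ℝ)] c₀] g := by
      filter_upwards [nhdsWithin_le_nhds (hgev.and (hev1.and hev2)),
        self_mem_nhdsWithin] with c hcprop hcmem
      obtain ⟨hΦc, hdomc, hsgnc⟩ := hcprop
      have heqc : g c * deriv r (g c - c) = r (g c - c) := by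
        have h := hΦc
        linarith [h]
      rcases huniq c hcmem (g c) hdomc heqc with h' | h'
      · exact h'.symm
      · exfalso
        have h'' := hzo c hcmem
        rw [h'] at hsgnc
        linarith
    have hzd : HasDerivWithinAt z (-(A/B)) (Set.Ici 0) c₀ :=
      (hgd.hasDerivWithinAt).congr_of_eventuallyEq hevz (by rw [hg0])
    have hzc : z c₀ = r (z c₀ - c₀) / deriv r (z c₀ - c₀) := by
      rw [eq_div_iff (hP0 c₀ hc₀)]
      exact heq c₀ hc₀
    have hval : -(A/B) = 1 - (deriv r (z c₀ - c₀))^2 /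
        (((n:ℝ)-1) * (1 + (deriv r (z c₀ - c₀))^2)) := by
      have hRne := (hpos _ hw₀U).ne'
      have hPne := hP0 c₀ hc₀
      have hZne := hz0 c₀ hc₀
      have hrel := heq c₀ hc₀
      have hSne : (1 + (deriv r (z c₀ - c₀))^2) ≠ 0 := by positivity
      rw [hA, hB, hQ _ hw₀U]
      set P := deriv r (z c₀ - c₀) with hPd
      set R := r (z c₀ - c₀) with hRd
      set Z := z c₀ with hZd
      clear_value P R Z
      rw [← hrel]
      have hZP : Z * P ≠ 0 := mul_ne_zero hZne hPne
      field_simp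
      ring
    rw [hval] at hzd
    exact hzd
  -- chain rule pieces
  have keyw : ∀ c, 0 ≤ c → HasDerivWithinAt (fun c' => z c' - c')
      ((1 - (deriv r (z c - c))^2 / (((n:ℝ)-1) * (1 + (deriv r (z c - c))^2))) - 1)
      (Set.Ici 0) c := by
    intro c hc
    exact (key0 c hc).sub (hasDerivWithinAt_id c _)
  have keyR : ∀ c, 0 ≤ c → HasDerivWithinAt (fun c' => r (z c' - c'))
      (deriv r (z c - c) *
        ((1 - (deriv r (z c - c))^2 / (((n:ℝ)-1) * (1 + (deriv r (z c - c))^2))) - 1))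
      (Set.Ici 0) c := by
    intro c hc
    exact HasDerivAt.comp_hasDerivWithinAt_of_eq c ((hdiff _ (hdom c hc)).1.hasDerivAt) (keyw c hc) rfl
  have keyP : ∀ c, 0 ≤ c → HasDerivWithinAt (fun c' => deriv r (z c' - c'))
      (deriv (deriv r) (z c - c) *
        ((1 - (deriv r (z c - c))^2 / (((n:ℝ)-1) * (1 + (deriv r (z c - c))^2))) - 1))
      (Set.Ici 0) c := by
    intro c hc
    exact HasDerivAt.comp_hasDerivWithinAt_of_eq c ((hdiff _ (hdom c hc)).2.hasDerivAt) (keyw c hc) rfl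
  -- first derivative of f equals ψ
  have keyf : ∀ c, 0 ≤ c → HasDerivWithinAt f
      (2*(r (z c - c))/(deriv r (z c - c)) -
        2*(r (z c - c))*(deriv r (z c - c))/((n:ℝ)-1))
      (Set.Ici 0) c := by
    intro c hc
    rw [hf]
    have h1 := (key0 c hc).pow 2
    have h2 := (keyR c hc).pow 2
    have h3 := h1.add h2
    refine h3.congr_deriv ?_
    have hRne := (hpos _ (hdom c hc)).ne'
    have hPne := hP0 c hc
    have hZne := hz0 c hc
    have hrel := heq c hc
    have hSne : (1 + (deriv r (z c - c))^2) ≠ 0 := by positivity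
    set P := deriv r (z c - c) with hPd
    set R := r (z c - c) with hRd
    set Z := z c with hZd
    clear_value P R Z
    rw [← hrel]
    field_simp
    ring
  have hdw : ∀ c, 0 ≤ c → derivWithin f (Set.Ici 0) c =
      2*(r (z c - c))/(deriv r (z c - c)) -
        2*(r (z c - c))*(deriv r (z c - c))/((n:ℝ)-1) :=
    fun c hc => (keyf c hc).derivWithin (uniqueDiffOn_Ici 0 c hc)
  -- conclude
  intro c hc
  have hred : derivWithin (derivWithin f (Set.Ici 0)) (Set.Ici 0) c =
      derivWithin (fun c' => 2*(r (z c' - c'))/(deriv r (z c' - c')) -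
        2*(r (z c' - c'))*(deriv r (z c' - c'))/((n:ℝ)-1)) (Set.Ici 0) c :=
    derivWithin_congr (fun x hx => hdw x hx) (hdw c hc)
  have hψd : HasDerivWithinAt (fun c' => 2*(r (z c' - c'))/(deriv r (z c' - c')) -
        2*(r (z c' - c'))*(deriv r (z c' - c'))/((n:ℝ)-1))
      (((2 * (deriv r (z c - c) *
          ((1 - (deriv r (z c - c))^2 / (((n:ℝ)-1) * (1 + (deriv r (z c - c))^2))) - 1)))
          * deriv r (z c - c) -
        2*(r (z c - c)) * (deriv (deriv r) (z c - c) *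
          ((1 - (deriv r (z c - c))^2 / (((n:ℝ)-1) * (1 + (deriv r (z c - c))^2))) - 1)))
          / (deriv r (z c - c))^2 -
       ((2 * (deriv r (z c - c) *
          ((1 - (deriv r (z c - c))^2 / (((n:ℝ)-1) * (1 + (deriv r (z c - c))^2))) - 1)))
          * deriv r (z c - c) +
        (2*(r (z c - c))) * (deriv (deriv r) (z c - c) *
          ((1 - (deriv r (z c - c))^2 / (((n:ℝ)-1) * (1 + (deriv r (z c - c))^2))) - 1)))
          / ((n:ℝ)-1))
      (Set.Ici 0) c := by
    have hR' := (keyR c hc).const_mul (2:ℝ)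
    have hP' := keyP c hc
    have term1 := hR'.div hP' (hP0 c hc)
    have term2 := (hR'.mul hP').div_const ((n:ℝ)-1)
    exact term1.sub term2
  have hV := hψd.derivWithin (uniqueDiffOn_Ici 0 c hc)
  rw [hred, hV]
  rw [← hFI _ (hdom c hc)]
  rw [hQ _ (hdom c hc)]
  have hRne := (hpos _ (hdom c hc)).ne'
  have hPne := hP0 c hc
  have hSne : (1 + (deriv r (z c - c))^2) ≠ 0 := by positivity
  field_simp
  ring


end CatAux

/-- A maximal `n`-catenoid profile function: a twice differentiable positive function
`r` on the interval `(-T, T)` (where `0 < T ≤ ∞`, encoded via `T : EReal`) with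
`r 0 = 1`, `r' 0 = 0`, satisfying the catenoid ODE `r·r'' − (n−1)(1 + r'²) = 0`,
and with `r z → ∞` as `z → ±T`. -/
def IsMaxCatenoidProfile (n : ℕ) (T : EReal) (r : ℝ → ℝ) : Prop :=
  0 < T ∧
  (∀ z : ℝ, (z : EReal) ∈ Set.Ioo (-T) T → 0 < r z) ∧
  (∀ z : ℝ, (z : EReal) ∈ Set.Ioo (-T) T →
    DifferentiableAt ℝ r z ∧ DifferentiableAt ℝ (deriv r) z) ∧
  r 0 = 1 ∧ deriv r 0 = 0 ∧
  (∀ z : ℝ, (z : EReal) ∈ Set.Ioo (-T) T →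
    r z * deriv (deriv r) z - ((n : ℝ) - 1) * (1 + (deriv r z) ^ 2) = 0) ∧
  Filter.Tendsto r
    (Filter.comap (fun z : ℝ => (z : EReal)) (nhdsWithin T (Set.Iio T))) Filter.atTop ∧
  Filter.Tendsto r
    (Filter.comap (fun z : ℝ => (z : EReal)) (nhdsWithin (-T) (Set.Ioi (-T)))) Filter.atTop

/-- With `z₁(c) < 0 < z₂(c)` the two radial-tangency points and
`f_i(c) = z_i(c)² + r(z_i(c) − c)²`, for `i = 1, 2` and `c ≥ 0` one has
`((n−1)/2)·f_i''(c) = n − 3 − 2/(n−1) + (n/(n−1))·(r^(2n−2) + r^(2−2n))`, where `r`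
is evaluated at `z_i(c) − c`; in particular `f₁''(0) = f₂''(0)`. -/
theorem squared_radius_second_derivative_formula (n : ℕ) (hn : 2 ≤ n)
    (T : EReal) (r : ℝ → ℝ) (hr : IsMaxCatenoidProfile n T r)
    (z₁ z₂ : ℝ → ℝ)
    (hdom₁ : ∀ c : ℝ, 0 ≤ c → ((z₁ c - c : ℝ) : EReal) ∈ Set.Ioo (-T) T)
    (hdom₂ : ∀ c : ℝ, 0 ≤ c → ((z₂ c - c : ℝ) : EReal) ∈ Set.Ioo (-T) T)
    (hneg : ∀ c : ℝ, 0 ≤ c → z₁ c < 0)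
    (hpos : ∀ c : ℝ, 0 ≤ c → 0 < z₂ c)
    (heq₁ : ∀ c : ℝ, 0 ≤ c → z₁ c * deriv r (z₁ c - c) = r (z₁ c - c))
    (heq₂ : ∀ c : ℝ, 0 ≤ c → z₂ c * deriv r (z₂ c - c) = r (z₂ c - c))
    (huniq : ∀ c : ℝ, 0 ≤ c → ∀ z : ℝ, ((z - c : ℝ) : EReal) ∈ Set.Ioo (-T) T →
      z * deriv r (z - c) = r (z - c) → z = z₁ c ∨ z = z₂ c)
    (f₁ f₂ : ℝ → ℝ)
    (hf₁ : f₁ = fun c => (z₁ c) ^ 2 + (r (z₁ c - c)) ^ 2)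
    (hf₂ : f₂ = fun c => (z₂ c) ^ 2 + (r (z₂ c - c)) ^ 2) :
    (∀ c : ℝ, 0 ≤ c →
      (((n : ℝ) - 1) / 2) * derivWithin (derivWithin f₁ (Set.Ici 0)) (Set.Ici 0) c =
        (n : ℝ) - 3 - 2 / ((n : ℝ) - 1) +
          (n : ℝ) / ((n : ℝ) - 1) *
            ((r (z₁ c - c)) ^ (2 * n - 2) + ((r (z₁ c - c)) ^ (2 * n - 2))⁻¹)) ∧
    (∀ c : ℝ, 0 ≤ c →
      (((n : ℝ) - 1) / 2) * derivWithin (derivWithin f₂ (Set.Ici 0)) (Set.Ici 0) c =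
        (n : ℝ) - 3 - 2 / ((n : ℝ) - 1) +
          (n : ℝ) / ((n : ℝ) - 1) *
            ((r (z₂ c - c)) ^ (2 * n - 2) + ((r (z₂ c - c)) ^ (2 * n - 2))⁻¹)) ∧
    derivWithin (derivWithin f₁ (Set.Ici 0)) (Set.Ici 0) 0 =
      derivWithin (derivWithin f₂ (Set.Ici 0)) (Set.Ici 0) 0 := by
  obtain ⟨hT, hrpos, hrdiff, hr0, hr'0, hODE, _htop, _hbot⟩ := hr
  have hrpos' : ∀ z ∈ CatAux.U T, 0 < r z := hrpos
  have hrdiff' : ∀ z ∈ CatAux.U T, DifferentiableAt ℝ r z ∧ DifferentiableAt ℝ (deriv r) z :=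
    hrdiff
  have hODE' : ∀ z ∈ CatAux.U T,
      r z * deriv (deriv r) z - ((n:ℝ)-1)*(1 + (deriv r z)^2) = 0 := hODE
  have hdom₁' : ∀ c, 0 ≤ c → (z₁ c - c) ∈ CatAux.U T := hdom₁
  have hdom₂' : ∀ c, 0 ≤ c → (z₂ c - c) ∈ CatAux.U T := hdom₂
  have h1 := CatAux.branch_formula hn hT hrpos' hrdiff' hr0 hr'0 hODE' z₁ z₂ (-1)
    hdom₁' (fun c hc => by have := hneg c hc; linarith)
    (fun c hc => by have := hpos c hc; linarith) heq₁
    (fun c hc x hx hxe => huniq c hc x hx hxe) f₁ hf₁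
  have h2 := CatAux.branch_formula hn hT hrpos' hrdiff' hr0 hr'0 hODE' z₂ z₁ 1
    hdom₂' (fun c hc => by have := hpos c hc; linarith)
    (fun c hc => by have := hneg c hc; linarith) heq₂
    (fun c hc x hx hxe => (huniq c hc x hx hxe).symm) f₂ hf₂
  refine ⟨h1, h2, ?_⟩
  -- symmetry: -(z₂ 0) is the negative solution at c = 0
  have heven := CatAux.r_even hn hrpos' hrdiff' hr'0 hODE'
  have hm : (z₂ 0 - 0) ∈ CatAux.U T := hdom₂' 0 le_rfl
  rw [sub_zero] at hm
  have hmneg : (-(z₂ 0)) ∈ CatAux.U T := CatAux.neg_mem_U hm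
  have heq20 := heq₂ 0 le_rfl
  rw [sub_zero] at heq20
  have hev := heven (z₂ 0) hm
  have hsol : (-(z₂ 0)) * deriv r (-(z₂ 0) - 0) = r (-(z₂ 0) - 0) := by
    rw [sub_zero, hev.2, hev.1, neg_mul_neg]
    exact heq20
  have hdomsol : ((-(z₂ 0) - 0 : ℝ) : EReal) ∈ Set.Ioo (-T) T := by
    rw [sub_zero]
    exact hmneg
  rcases huniq 0 le_rfl (-(z₂ 0)) hdomsol hsol with h | h
  · have key : r (z₁ 0 - 0) = r (z₂ 0 - 0) := by
      rw [sub_zero, sub_zero, ← h, hev.1]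
    have d1 := h1 0 le_rfl
    have d2 := h2 0 le_rfl
    rw [key] at d1
    have hcomb : (((n : ℝ) - 1) / 2) * derivWithin (derivWithin f₁ (Set.Ici 0)) (Set.Ici 0) 0 =
        (((n : ℝ) - 1) / 2) * derivWithin (derivWithin f₂ (Set.Ici 0)) (Set.Ici 0) 0 :=
      d1.trans d2.symm
    have hne : (((n : ℝ) - 1) / 2) ≠ 0 := by
      have : (2:ℝ) ≤ (n:ℝ) := by exact_mod_cast hn
      intro hcontra
      rw [div_eq_zero_iff] at hcontra
      rcases hcontra with h' | h'
      · linarith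
      · norm_num at h'
    exact mul_left_cancel₀ hne hcomb
  · exfalso
    have := hpos 0 le_rfl
    have : z₂ 0 = 0 := by linarith [this, h]
    linarith [hpos 0 le_rfl]
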